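/- Let X_1, X_2, Y_1, Y_2, A be pairwise disjoint finite sets of indeterminates with |X_1| = |Y_1| + |A| and |Y_2| = |X_2| + |A|, and let 1 ≤ k ≤ |X_1|. In the polynomial ring ℂ[X_1 ⊔ X_2 ⊔ Y_1 ⊔ Y_2 ⊔ A], the ideal generated by {e_a(Y_1 ⊔ A) − e_a(X_1) : 1 ≤ a ≤ |X_1|} ∪ {e_b(Y_2) − e_b(X_2 ⊔ A) : 1 ≤ b ≤ |Y_2|} is equal to the ideal generated by {e_a(X_1 ⊔ X_2) − e_a(Y_1 ⊔ Y_2) : 1 ≤ a ≤ k} ∪ {e_a(Y_1 ⊔ A) − e_a(X_1) : k < a ≤ |X_1|} ∪ {e_b(Y_2) − e_b(X_2 ⊔ A) : 1 ≤ b ≤ |Y_2|}. (This is the ideal-level content of the row operations replacing the first k positive entries of the Koszul matrix factorization of a resolved crossing by the defining relations of the ring 𝒱.) -/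

import Mathlib

open MvPolynomial

set_option synthInstance.maxHeartbeats 400000
set_option maxHeartbeats 1000000

noncomputable section

/-- The `j`-th elementary symmetric polynomial `e_j(U)` in the set of variables `U`,
with `e_0(U) = 1` and `e_j(U) = 0` for `j > |U|`. -/
def esymF {V : Type} [DecidableEq V] (U : Finset V) (j : ℕ) : MvPolynomial V ℂ :=
  ∑ t ∈ U.powersetCard j, ∏ v ∈ t, X v

/-- The variable set `X_1 ⊔ X_2 ⊔ Y_1 ⊔ Y_2 ⊔ A`. -/
abbrev V9 (n1 n2 m1 m2 c : ℕ) : Type := Fin n1 ⊕ Fin n2 ⊕ Fin m1 ⊕ Fin m2 ⊕ Fin c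

/-- The alphabet `X_1`. -/
def FX1 (n1 n2 m1 m2 c : ℕ) : Finset (V9 n1 n2 m1 m2 c) := Finset.univ.image Sum.inl

/-- The alphabet `X_2`. -/
def FX2 (n1 n2 m1 m2 c : ℕ) : Finset (V9 n1 n2 m1 m2 c) :=
  Finset.univ.image fun a : Fin n2 => Sum.inr (Sum.inl a)

/-- The alphabet `Y_1`. -/
def FY1 (n1 n2 m1 m2 c : ℕ) : Finset (V9 n1 n2 m1 m2 c) :=
  Finset.univ.image fun a : Fin m1 => Sum.inr (Sum.inr (Sum.inl a))

/-- The alphabet `Y_2`. -/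
def FY2 (n1 n2 m1 m2 c : ℕ) : Finset (V9 n1 n2 m1 m2 c) :=
  Finset.univ.image fun a : Fin m2 => Sum.inr (Sum.inr (Sum.inr (Sum.inl a)))

/-- The alphabet `A`. -/
def FA (n1 n2 m1 m2 c : ℕ) : Finset (V9 n1 n2 m1 m2 c) :=
  Finset.univ.image fun a : Fin c => Sum.inr (Sum.inr (Sum.inr (Sum.inr a)))


section GenericEsym
variable {V : Type} [DecidableEq V]

lemma esymF_zero (U : Finset V) : esymF U 0 = 1 := by
  simp [esymF]

lemma esymF_eq_zero {U : Finset V} {j : ℕ} (h : U.card < j) : esymF U j = 0 := by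
  rw [esymF, Finset.powersetCard_eq_empty.2 h, Finset.sum_empty]

def genP (U : Finset V) : Polynomial (MvPolynomial V ℂ) :=
  ∏ v ∈ U, (Polynomial.C (X v) * Polynomial.X + 1)

lemma esymF_insert {a : V} {s : Finset V} (ha : a ∉ s) (n : ℕ) :
    esymF (insert a s) (n + 1) = esymF s (n + 1) + X a * esymF s n := by
  rw [esymF, Finset.powersetCard_succ_insert ha, Finset.sum_union, esymF, esymF,
    Finset.sum_image, Finset.mul_sum]
  · congr 1
    refine Finset.sum_congr rfl fun t ht => ?_
    rw [Finset.prod_insert]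
    intro hat
    exact ha ((Finset.mem_powersetCard.1 ht).1 hat)
  · intro t ht u hu h
    have hat : a ∉ t := fun hat => ha ((Finset.mem_powersetCard.1 ht).1 hat)
    have hau : a ∉ u := fun hau => ha ((Finset.mem_powersetCard.1 hu).1 hau)
    rw [← Finset.erase_insert hat, ← Finset.erase_insert hau, h]
  · rw [Finset.disjoint_left]
    intro t ht ht'
    obtain ⟨u, hu, rfl⟩ := Finset.mem_image.1 ht'
    exact ha ((Finset.mem_powersetCard.1 ht).1 (Finset.mem_insert_self a u))

lemma genP_coeff (U : Finset V) (j : ℕ) : (genP U).coeff j = esymF U j := by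
  induction U using Finset.induction_on generalizing j with
  | empty =>
    cases j with
    | zero => simp [genP, esymF]
    | succ n =>
      rw [esymF, Finset.powersetCard_eq_empty.2 (by simp), Finset.sum_empty, genP,
        Finset.prod_empty, Polynomial.coeff_one]
      simp
  | @insert a s ha ih =>
    rw [genP, Finset.prod_insert ha, ← genP, add_mul, one_mul, Polynomial.coeff_add,
      mul_assoc, Polynomial.coeff_C_mul]
    cases j with
    | zero => simp [ih, esymF_zero]
    | succ n =>
      rw [Polynomial.coeff_X_mul, ih, ih, esymF_insert ha]
      ring

lemma esymF_union {S T : Finset V} (h : Disjoint S T) (a : ℕ) :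
    esymF (S ∪ T) a = ∑ ij ∈ Finset.HasAntidiagonal.antidiagonal a, esymF S ij.1 * esymF T ij.2 := by
  have h1 : genP (S ∪ T) = genP S * genP T := Finset.prod_union h
  have h2 := congrArg (fun p => Polynomial.coeff p a) h1
  simpa [genP_coeff, Polynomial.coeff_mul] using h2

end GenericEsym

section Alphabets
variable {n1 n2 m1 m2 c : ℕ}

lemma card_FX1 : (FX1 n1 n2 m1 m2 c).card = n1 := by
  rw [FX1, Finset.card_image_of_injective _ (fun a b h => by simpa using h)]; simp

lemma card_FX2 : (FX2 n1 n2 m1 m2 c).card = n2 := by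
  rw [FX2, Finset.card_image_of_injective _ (fun a b h => by simpa using h)]; simp

lemma card_FY1 : (FY1 n1 n2 m1 m2 c).card = m1 := by
  rw [FY1, Finset.card_image_of_injective _ (fun a b h => by simpa using h)]; simp

lemma card_FY2 : (FY2 n1 n2 m1 m2 c).card = m2 := by
  rw [FY2, Finset.card_image_of_injective _ (fun a b h => by simpa using h)]; simp

lemma card_FA : (FA n1 n2 m1 m2 c).card = c := by
  rw [FA, Finset.card_image_of_injective _ (fun a b h => by simpa using h)]; simp

lemma disj_Y1_A : Disjoint (FY1 n1 n2 m1 m2 c) (FA n1 n2 m1 m2 c) := by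
  simp [Finset.disjoint_left, FY1, FA]

lemma disj_X2_A : Disjoint (FX2 n1 n2 m1 m2 c) (FA n1 n2 m1 m2 c) := by
  simp [Finset.disjoint_left, FX2, FA]

lemma disj_X2_X1 : Disjoint (FX2 n1 n2 m1 m2 c) (FX1 n1 n2 m1 m2 c) := by
  simp [Finset.disjoint_left, FX2, FX1]

lemma disj_Y1_Y2 : Disjoint (FY1 n1 n2 m1 m2 c) (FY2 n1 n2 m1 m2 c) := by
  simp [Finset.disjoint_left, FY1, FY2]

lemma disj_X2_Y1A :
    Disjoint (FX2 n1 n2 m1 m2 c) (FY1 n1 n2 m1 m2 c ∪ FA n1 n2 m1 m2 c) := by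
  simp [Finset.disjoint_left, FX2, FY1, FA]

lemma disj_Y1_X2A :
    Disjoint (FY1 n1 n2 m1 m2 c) (FX2 n1 n2 m1 m2 c ∪ FA n1 n2 m1 m2 c) := by
  simp [Finset.disjoint_left, FY1, FX2, FA]

/-- `u_a = e_a(Y1 ∪ A) - e_a(X1)`. -/
def uP (n1 n2 m1 m2 c : ℕ) (a : ℕ) : MvPolynomial (V9 n1 n2 m1 m2 c) ℂ :=
  esymF (FY1 n1 n2 m1 m2 c ∪ FA n1 n2 m1 m2 c) a - esymF (FX1 n1 n2 m1 m2 c) a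

/-- `v_b = e_b(Y2) - e_b(X2 ∪ A)`. -/
def vP (n1 n2 m1 m2 c : ℕ) (b : ℕ) : MvPolynomial (V9 n1 n2 m1 m2 c) ℂ :=
  esymF (FY2 n1 n2 m1 m2 c) b - esymF (FX2 n1 n2 m1 m2 c ∪ FA n1 n2 m1 m2 c) b

/-- `w_a = e_a(X1 ∪ X2) - e_a(Y1 ∪ Y2)`. -/
def wP (n1 n2 m1 m2 c : ℕ) (a : ℕ) : MvPolynomial (V9 n1 n2 m1 m2 c) ℂ :=
  esymF (FX1 n1 n2 m1 m2 c ∪ FX2 n1 n2 m1 m2 c) a -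
    esymF (FY1 n1 n2 m1 m2 c ∪ FY2 n1 n2 m1 m2 c) a

lemma uP_zero : uP n1 n2 m1 m2 c 0 = 0 := by
  simp [uP, esymF_zero]

lemma vP_zero : vP n1 n2 m1 m2 c 0 = 0 := by
  simp [vP, esymF_zero]

lemma uP_eq_zero (h1 : n1 = m1 + c) {a : ℕ} (ha : n1 < a) : uP n1 n2 m1 m2 c a = 0 := by
  rw [uP, esymF_eq_zero, esymF_eq_zero, sub_zero]
  · rw [card_FX1]; exact ha
  · rw [Finset.card_union_of_disjoint disj_Y1_A, card_FY1, card_FA, ← h1]; exact ha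

lemma vP_eq_zero (h2 : m2 = n2 + c) {b : ℕ} (hb : m2 < b) : vP n1 n2 m1 m2 c b = 0 := by
  rw [vP, esymF_eq_zero, esymF_eq_zero, sub_zero]
  · rw [Finset.card_union_of_disjoint disj_X2_A, card_FX2, card_FA, ← h2]; exact hb
  · rw [card_FY2]; exact hb

/-- The key identity. -/
lemma keyM (n1 n2 m1 m2 c a : ℕ) :
    wP n1 n2 m1 m2 c a =
      -(∑ pq ∈ Finset.HasAntidiagonal.antidiagonal a, esymF (FX2 n1 n2 m1 m2 c) pq.1 * uP n1 n2 m1 m2 c pq.2)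
      - ∑ ij ∈ Finset.HasAntidiagonal.antidiagonal a, esymF (FY1 n1 n2 m1 m2 c) ij.1 * vP n1 n2 m1 m2 c ij.2 := by
  have hX : esymF (FX1 n1 n2 m1 m2 c ∪ FX2 n1 n2 m1 m2 c) a =
      ∑ pq ∈ Finset.HasAntidiagonal.antidiagonal a,
        esymF (FX2 n1 n2 m1 m2 c) pq.1 * esymF (FX1 n1 n2 m1 m2 c) pq.2 := by
    rw [Finset.union_comm, esymF_union disj_X2_X1]
  have hY : esymF (FY1 n1 n2 m1 m2 c ∪ FY2 n1 n2 m1 m2 c) a =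
      ∑ ij ∈ Finset.HasAntidiagonal.antidiagonal a,
        esymF (FY1 n1 n2 m1 m2 c) ij.1 * esymF (FY2 n1 n2 m1 m2 c) ij.2 :=
    esymF_union disj_Y1_Y2 a
  have hC : ∑ pq ∈ Finset.HasAntidiagonal.antidiagonal a,
        esymF (FX2 n1 n2 m1 m2 c) pq.1 *
          esymF (FY1 n1 n2 m1 m2 c ∪ FA n1 n2 m1 m2 c) pq.2 =
      ∑ ij ∈ Finset.HasAntidiagonal.antidiagonal a,
        esymF (FY1 n1 n2 m1 m2 c) ij.1 *
          esymF (FX2 n1 n2 m1 m2 c ∪ FA n1 n2 m1 m2 c) ij.2 := by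
    rw [← esymF_union disj_X2_Y1A, ← esymF_union disj_Y1_X2A]
    congr 1
    ext x
    simp only [Finset.mem_union]
    tauto
  simp only [wP, uP, vP, hX, hY, mul_sub, Finset.sum_sub_distrib]
  linear_combination hC

/-- With `|X_1| = |Y_1| + |A|`, `|Y_2| = |X_2| + |A|` and `1 ≤ k ≤ |X_1|`,
the ideal generated by `{e_a(Y_1 ⊔ A) − e_a(X_1) : 1 ≤ a ≤ |X_1|}` together with
`{e_b(Y_2) − e_b(X_2 ⊔ A) : 1 ≤ b ≤ |Y_2|}` is equal to the ideal generated by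
`{e_a(X_1 ⊔ X_2) − e_a(Y_1 ⊔ Y_2) : 1 ≤ a ≤ k}`, `{e_a(Y_1 ⊔ A) − e_a(X_1) : k < a ≤ |X_1|}`
and `{e_b(Y_2) − e_b(X_2 ⊔ A) : 1 ≤ b ≤ |Y_2|}`. -/
theorem statement10 (n1 n2 m1 m2 c : ℕ) (h1 : n1 = m1 + c) (h2 : m2 = n2 + c)
    (k : ℕ) (hk1 : 1 ≤ k) (hkn : k ≤ n1) :
    Ideal.span
        ({f | ∃ a : ℕ, 1 ≤ a ∧ a ≤ n1 ∧
            f = esymF (FY1 n1 n2 m1 m2 c ∪ FA n1 n2 m1 m2 c) a - esymF (FX1 n1 n2 m1 m2 c) a} ∪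
          {f | ∃ b : ℕ, 1 ≤ b ∧ b ≤ m2 ∧
            f = esymF (FY2 n1 n2 m1 m2 c) b -
              esymF (FX2 n1 n2 m1 m2 c ∪ FA n1 n2 m1 m2 c) b}) =
      Ideal.span
        ({f | ∃ a : ℕ, 1 ≤ a ∧ a ≤ k ∧
            f = esymF (FX1 n1 n2 m1 m2 c ∪ FX2 n1 n2 m1 m2 c) a -
              esymF (FY1 n1 n2 m1 m2 c ∪ FY2 n1 n2 m1 m2 c) a} ∪
          {f | ∃ a : ℕ, k < a ∧ a ≤ n1 ∧
            f = esymF (FY1 n1 n2 m1 m2 c ∪ FA n1 n2 m1 m2 c) a - esymF (FX1 n1 n2 m1 m2 c) a} ∪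
          {f | ∃ b : ℕ, 1 ≤ b ∧ b ≤ m2 ∧
            f = esymF (FY2 n1 n2 m1 m2 c) b -
              esymF (FX2 n1 n2 m1 m2 c ∪ FA n1 n2 m1 m2 c) b}) := by
  set I := Ideal.span
        ({f | ∃ a : ℕ, 1 ≤ a ∧ a ≤ n1 ∧
            f = esymF (FY1 n1 n2 m1 m2 c ∪ FA n1 n2 m1 m2 c) a - esymF (FX1 n1 n2 m1 m2 c) a} ∪
          {f | ∃ b : ℕ, 1 ≤ b ∧ b ≤ m2 ∧
            f = esymF (FY2 n1 n2 m1 m2 c) b -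
              esymF (FX2 n1 n2 m1 m2 c ∪ FA n1 n2 m1 m2 c) b}) with hI
  set J := Ideal.span
        ({f | ∃ a : ℕ, 1 ≤ a ∧ a ≤ k ∧
            f = esymF (FX1 n1 n2 m1 m2 c ∪ FX2 n1 n2 m1 m2 c) a -
              esymF (FY1 n1 n2 m1 m2 c ∪ FY2 n1 n2 m1 m2 c) a} ∪
          {f | ∃ a : ℕ, k < a ∧ a ≤ n1 ∧
            f = esymF (FY1 n1 n2 m1 m2 c ∪ FA n1 n2 m1 m2 c) a - esymF (FX1 n1 n2 m1 m2 c) a} ∪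
          {f | ∃ b : ℕ, 1 ≤ b ∧ b ≤ m2 ∧
            f = esymF (FY2 n1 n2 m1 m2 c) b -
              esymF (FX2 n1 n2 m1 m2 c ∪ FA n1 n2 m1 m2 c) b}) with hJ
  -- membership of the v's in both ideals
  have hvI : ∀ b : ℕ, vP n1 n2 m1 m2 c b ∈ I := by
    intro b
    rcases Nat.eq_zero_or_pos b with hb | hb
    · rw [hb, vP_zero]; exact I.zero_mem
    rcases le_or_gt b m2 with hbm | hbm
    · exact Ideal.subset_span (Or.inr ⟨b, hb, hbm, rfl⟩)
    · rw [vP_eq_zero h2 hbm]; exact I.zero_mem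
  have hvJ : ∀ b : ℕ, vP n1 n2 m1 m2 c b ∈ J := by
    intro b
    rcases Nat.eq_zero_or_pos b with hb | hb
    · rw [hb, vP_zero]; exact J.zero_mem
    rcases le_or_gt b m2 with hbm | hbm
    · exact Ideal.subset_span (Or.inr ⟨b, hb, hbm, rfl⟩)
    · rw [vP_eq_zero h2 hbm]; exact J.zero_mem
  have huI : ∀ a : ℕ, uP n1 n2 m1 m2 c a ∈ I := by
    intro a
    rcases Nat.eq_zero_or_pos a with ha | ha
    · rw [ha, uP_zero]; exact I.zero_mem
    rcases le_or_gt a n1 with han | han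
    · exact Ideal.subset_span (Or.inl ⟨a, ha, han, rfl⟩)
    · rw [uP_eq_zero h1 han]; exact I.zero_mem
  -- w_a ∈ I for all a
  have hwI : ∀ a : ℕ, wP n1 n2 m1 m2 c a ∈ I := by
    intro a
    rw [keyM]
    refine sub_mem (neg_mem (Ideal.sum_mem _ fun pq _ => Ideal.mul_mem_left _ _ (huI pq.2)))
      (Ideal.sum_mem _ fun ij _ => Ideal.mul_mem_left _ _ (hvI ij.2))
  -- u_a ∈ J for all a, by strong induction
  have huJ : ∀ a : ℕ, uP n1 n2 m1 m2 c a ∈ J := by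
    intro a
    induction a using Nat.strong_induction_on with
    | _ a ih =>
      rcases Nat.eq_zero_or_pos a with ha | ha
      · rw [ha, uP_zero]; exact J.zero_mem
      rcases le_or_gt a n1 with han | han
      swap
      · rw [uP_eq_zero h1 han]; exact J.zero_mem
      rcases le_or_gt a k with hak | hak
      swap
      · exact Ideal.subset_span (Or.inl (Or.inr ⟨a, hak, han, rfl⟩))
      -- 1 ≤ a ≤ k : use the key identity
      have hmem : ((0 : ℕ), a) ∈ Finset.HasAntidiagonal.antidiagonal a := by
        simp
      have hTot : ∑ pq ∈ Finset.HasAntidiagonal.antidiagonal a,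
            esymF (FX2 n1 n2 m1 m2 c) pq.1 * uP n1 n2 m1 m2 c pq.2 =
          uP n1 n2 m1 m2 c a +
            ∑ pq ∈ (Finset.HasAntidiagonal.antidiagonal a).erase (0, a),
              esymF (FX2 n1 n2 m1 m2 c) pq.1 * uP n1 n2 m1 m2 c pq.2 := by
        rw [← Finset.add_sum_erase _ _ hmem, esymF_zero, one_mul]
      have hM := keyM n1 n2 m1 m2 c a
      have hrepr : uP n1 n2 m1 m2 c a =
          -(wP n1 n2 m1 m2 c a)
          - ∑ pq ∈ (Finset.HasAntidiagonal.antidiagonal a).erase (0, a),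
              esymF (FX2 n1 n2 m1 m2 c) pq.1 * uP n1 n2 m1 m2 c pq.2
          - ∑ ij ∈ Finset.HasAntidiagonal.antidiagonal a,
              esymF (FY1 n1 n2 m1 m2 c) ij.1 * vP n1 n2 m1 m2 c ij.2 := by
        linear_combination hM - hTot
      rw [hrepr]
      have hwJ : wP n1 n2 m1 m2 c a ∈ J :=
        Ideal.subset_span (Or.inl (Or.inl ⟨a, ha, hak, rfl⟩))
      refine sub_mem (sub_mem (neg_mem hwJ)
        (Ideal.sum_mem _ fun pq hpq => Ideal.mul_mem_left _ _ ?_))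
        (Ideal.sum_mem _ fun ij _ => Ideal.mul_mem_left _ _ (hvJ ij.2))
      have h' := Finset.mem_erase.1 hpq
      have h2' := Finset.HasAntidiagonal.mem_antidiagonal.1 h'.2
      have hlt : pq.2 < a := by
        rcases pq with ⟨p, s⟩
        simp only [Prod.mk.injEq, ne_eq, not_and] at h'
        simp only [Finset.HasAntidiagonal.mem_antidiagonal] at h2'
        simp only []
        rcases Nat.lt_or_ge s a with h | h
        · exact h
        · exfalso
          have hs : s = a := le_antisymm (by omega) h
          have hp : p = 0 := by omega
          exact h'.1 hp hs
      exact ih pq.2 hlt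
  apply le_antisymm
  · rw [hI]
    apply Ideal.span_le.2
    rintro f (⟨a, ha1, ha2, rfl⟩ | ⟨b, hb1, hb2, rfl⟩)
    · exact huJ a
    · exact hvJ b
  · rw [hJ]
    apply Ideal.span_le.2
    rintro f ((⟨a, ha1, ha2, rfl⟩ | ⟨a, ha1, ha2, rfl⟩) | ⟨b, hb1, hb2, rfl⟩)
    · exact hwI a
    · exact huI a
    · exact hvI b
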